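/- For every reduced strategy σ ∈ S and every infoset v ∈ N(σ), the sum over all actions a ∈ A(σ) that are descendants of v of 1/β(a) equals 1/β(v). -/

import Mathlib

open scoped Classical

/-- A finite rooted tree whose internal nodes are partitioned into infosets `N`
and actions `A`: the root is an infoset, every child of an infoset is an action,
every child of an action is an infoset or a leaf, and every infoset has at
least two children.  The tree structure is given by a parent function together
with a depth function witnessing well-foundedness. -/
structure EFTree (V : Type*) [Fintype V] [DecidableEq V] where
  root : V
  parent : V → V
  parent_root : parent root = root
  depth : V → ℕ
  depth_root : depth root = 0
  depth_parent : ∀ v : V, v ≠ root → depth v = depth (parent v) + 1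
  N : Finset V
  A : Finset V
  disj : Disjoint N A
  internal_iff : ∀ v : V, (v ∈ N ∨ v ∈ A) ↔ ∃ u : V, u ≠ root ∧ parent u = v
  root_N : root ∈ N
  infoset_child : ∀ u : V, u ≠ root → parent u ∈ N → u ∈ A
  action_child : ∀ u : V, u ≠ root → parent u ∈ A → u ∉ A
  branching : ∀ v ∈ N, 1 < (Finset.univ.filter fun u => u ≠ root ∧ parent u = v).card

namespace EFTree

variable {V : Type*} [Fintype V] [DecidableEq V] (T : EFTree V)

/-- The set `C(v)` of children of a node `v`. -/
def children (v : V) : Finset V := Finset.univ.filter fun u => u ≠ T.root ∧ T.parent u = v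

/-- The set `L` of leaves: the nodes that are neither infosets nor actions. -/
def leaves : Finset V := Finset.univ \ (T.N ∪ T.A)

/-- `Desc u v` means `u` is a descendant of `v` (every node is a descendant of itself). -/
def Desc (u v : V) : Prop := ∃ k : ℕ, T.parent^[k] u = v

/-- The reachable set `V(σ)` of a (sub-)strategy `σ` started at the node `w`:
the minimal set of nodes containing `w`, containing `σ v` for every infoset `v`
in the set, and containing all children of every action in the set. -/
def reachFrom (w : V) (σ : V → V) : Set V :=
  ⋂₀ {s : Set V | w ∈ s ∧ (∀ v ∈ T.N, v ∈ s → σ v ∈ s) ∧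
      ∀ a ∈ T.A, a ∈ s → ∀ u ∈ T.children a, u ∈ s}

/-- The reachable set `V(σ)` of a strategy `σ`. -/
def reachS (σ : V → V) : Set V := T.reachFrom T.root σ

/-- `σ : V → V` canonically represents a reduced sub-strategy at the node `w`:
at every infoset in its reachable set it selects a child, and everywhere else it
is the identity (so that each reduced sub-strategy, i.e. each restriction of a
sub-strategy at `w` to the infosets it can reach, has exactly one
representative). -/
def IsRedSubStrat (w : V) (σ : V → V) : Prop :=
  (∀ v ∈ T.N, v ∈ T.reachFrom w σ → σ v ∈ T.children v) ∧
  ∀ v : V, ¬(v ∈ T.N ∧ v ∈ T.reachFrom w σ) → σ v = v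

/-- `σ : V → V` canonically represents a reduced strategy, i.e. a member of `S`. -/
def IsRedStrat (σ : V → V) : Prop := T.IsRedSubStrat T.root σ

/-- The set `A(σ) = A ∩ V(σ)` of actions reachable under a reduced (sub-)strategy. -/
noncomputable def Aset (σ : V → V) : Finset V := T.A.filter fun a => a ∈ T.reachS σ

/-- The set `A(σ) = A ∩ V(σ)` for a reduced sub-strategy at `w`. -/
noncomputable def AsetFrom (w : V) (σ : V → V) : Finset V := T.A.filter fun a => a ∈ T.reachFrom w σ

/-- An environment chooses a child of every action. -/
def IsEnv (μ : V → V) : Prop := ∀ a ∈ T.A, μ a ∈ T.children a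

/-- The reachable set `V(μ)` of an environment `μ`: the minimal set of nodes
containing the root, all children of every infoset in the set, and `μ a` for
every action `a` in the set. -/
def reachE (μ : V → V) : Set V :=
  ⋂₀ {s : Set V | T.root ∈ s ∧ (∀ v ∈ T.N, v ∈ s → ∀ u ∈ T.children v, u ∈ s) ∧
      ∀ a ∈ T.A, a ∈ s → μ a ∈ s}

/-- `Z(μ)`: the set of actions reachable under `μ` whose chosen child is a leaf. -/
noncomputable def Zset (μ : V → V) : Finset V := T.A.filter fun a => a ∈ T.reachE μ ∧ μ a ∈ T.leaves

/-- A policy assigns to each action a probability in `[0,1]`, summing to one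
over the children of each infoset. -/
def IsPolicy (π : V → ℝ) : Prop :=
  (∀ a ∈ T.A, 0 ≤ π a ∧ π a ≤ 1) ∧ ∀ v ∈ T.N, ∑ a ∈ T.children v, π a = 1

/-- The root-to-leaf path traversed when the reduced strategy `σ` is played
against the environment `μ`: the minimal set of nodes containing the root,
containing `σ v` for every infoset `v` in the set, and `μ a` for every action
`a` in the set. -/
def playPath (σ μ : V → V) : Set V :=
  ⋂₀ {s : Set V | T.root ∈ s ∧ (∀ v ∈ T.N, v ∈ s → σ v ∈ s) ∧
      ∀ a ∈ T.A, a ∈ s → μ a ∈ s}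

/-- `z` is the last action node on the play path of `(σ, μ)`: it is an action on
the path of which every other action on the path is an ancestor. -/
def IsLastAction (σ μ : V → V) (z : V) : Prop :=
  z ∈ T.A ∧ z ∈ T.playPath σ μ ∧ ∀ a ∈ T.A, a ∈ T.playPath σ μ → T.Desc z a

end EFTree

namespace EFTree

variable {V : Type*} [Fintype V] [DecidableEq V] (T : EFTree V)

lemma descRefl (v : V) : T.Desc v v := ⟨0, rfl⟩

lemma descTrans {a b c : V} (h1 : T.Desc a b) (h2 : T.Desc b c) : T.Desc a c := by
  obtain ⟨k1, hk1⟩ := h1; obtain ⟨k2, hk2⟩ := h2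
  exact ⟨k2 + k1, by rw [Function.iterate_add_apply, hk1, hk2]⟩

lemma iterateRoot (k : ℕ) : T.parent^[k] T.root = T.root :=
  Function.iterate_fixed T.parent_root k

lemma descRoot {v : V} (h : T.Desc T.root v) : v = T.root := by
  obtain ⟨k, hk⟩ := h; rw [T.iterateRoot] at hk; exact hk.symm

lemma memChildren {u v : V} : u ∈ T.children v ↔ u ≠ T.root ∧ T.parent u = v := by
  simp [children]

lemma depthParentLe (x : V) : T.depth (T.parent x) ≤ T.depth x := by
  by_cases hx : x = T.root
  · subst hx; rw [T.parent_root]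
  · rw [T.depth_parent x hx]; omega

lemma depthIterateLe (k : ℕ) (x : V) : T.depth (T.parent^[k] x) ≤ T.depth x := by
  induction k generalizing x with
  | zero => simp
  | succ n ih =>
    rw [Function.iterate_succ_apply]
    exact le_trans (ih (T.parent x)) (T.depthParentLe x)

lemma descDepthLe {x y : V} (h : T.Desc x y) : T.depth y ≤ T.depth x := by
  obtain ⟨k, hk⟩ := h; rw [← hk]; exact T.depthIterateLe k x

lemma iterateEqOfDepthEq {k : ℕ} {x : V} (h : T.depth (T.parent^[k] x) = T.depth x) :
    T.parent^[k] x = x := by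
  cases k with
  | zero => rfl
  | succ n =>
    by_cases hx : x = T.root
    · subst hx; exact T.iterateRoot _
    · exfalso
      have h1 : T.depth (T.parent^[n + 1] x) ≤ T.depth (T.parent x) := by
        rw [Function.iterate_succ_apply]; exact T.depthIterateLe n (T.parent x)
      have h2 := T.depth_parent x hx
      omega

lemma descStep {b v : V} (h : T.Desc b v) (hne : b ≠ v) :
    b ≠ T.root ∧ T.Desc (T.parent b) v := by
  obtain ⟨k, hk⟩ := h
  cases k with
  | zero => exact absurd hk hne
  | succ n =>
    constructor
    · intro hb; apply hne; subst hb; rw [T.iterateRoot] at hk; exact hk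
    · exact ⟨n, by rw [← Function.iterate_succ_apply]; exact hk⟩

lemma descTotal {b u1 u2 : V} (h1 : T.Desc b u1) (h2 : T.Desc b u2) :
    T.Desc u1 u2 ∨ T.Desc u2 u1 := by
  obtain ⟨k1, hk1⟩ := h1; obtain ⟨k2, hk2⟩ := h2
  rcases le_total k1 k2 with h | h
  · left
    exact ⟨k2 - k1, by rw [← hk1, ← Function.iterate_add_apply, Nat.sub_add_cancel h, hk2]⟩
  · right
    exact ⟨k1 - k2, by rw [← hk2, ← Function.iterate_add_apply, Nat.sub_add_cancel h, hk1]⟩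

lemma childDepth {u v : V} (h : u ∈ T.children v) : T.depth u = T.depth v + 1 := by
  obtain ⟨h1, h2⟩ := T.memChildren.mp h
  rw [T.depth_parent u h1, h2]

lemma siblingEq {a u1 u2 b : V} (h1 : u1 ∈ T.children a) (h2 : u2 ∈ T.children a)
    (d1 : T.Desc b u1) (d2 : T.Desc b u2) : u1 = u2 := by
  have e1 := T.childDepth h1
  have e2 := T.childDepth h2
  rcases T.descTotal d1 d2 with ⟨k, hk⟩ | ⟨k, hk⟩
  · have h := T.iterateEqOfDepthEq (k := k) (x := u1) (by rw [hk]; omega)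
    exact h.symm.trans hk
  · have h := T.iterateEqOfDepthEq (k := k) (x := u2) (by rw [hk]; omega)
    exact (h.symm.trans hk).symm

lemma rootNotA : T.root ∉ T.A := Finset.disjoint_left.mp T.disj T.root_N

/-- Inductive characterization of the reach set of a strategy. -/
inductive ReachP (T : EFTree V) (σ : V → V) : V → Prop
  | root : ReachP T σ T.root
  | strat (v : V) : v ∈ T.N → ReachP T σ v → ReachP T σ (σ v)
  | act (a u : V) : a ∈ T.A → ReachP T σ a → u ∈ T.children a → ReachP T σ u

lemma reachS_iff (σ : V → V) (x : V) : x ∈ T.reachS σ ↔ ReachP T σ x := by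
  constructor
  · intro hx
    exact hx {y | ReachP T σ y}
      ⟨ReachP.root, fun v hv h => ReachP.strat v hv h,
       fun a ha h u hu => ReachP.act a u ha h hu⟩
  · intro hx
    intro s hs
    induction hx with
    | root => exact hs.1
    | strat v hv h ih => exact hs.2.1 v hv ih
    | act a u ha h hu ih => exact hs.2.2 a ha ih u hu

lemma reachStrat {σ : V → V} {v : V} (hv : v ∈ T.N) (h : v ∈ T.reachS σ) :
    σ v ∈ T.reachS σ :=
  (T.reachS_iff σ _).mpr (ReachP.strat v hv ((T.reachS_iff σ v).mp h))

lemma reachChild {σ : V → V} {a u : V} (ha : a ∈ T.A) (h : a ∈ T.reachS σ)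
    (hu : u ∈ T.children a) : u ∈ T.reachS σ :=
  (T.reachS_iff σ _).mpr (ReachP.act a u ha ((T.reachS_iff σ a).mp h) hu)

/-- Every reachable strict descendant of a reachable infoset `v` is a descendant
of the action `σ v` chosen at `v`. -/
lemma descThroughSigma {σ : V → V} (hσ : T.IsRedStrat σ) {v : V} (hv : v ∈ T.N) :
    ∀ {b : V}, ReachP T σ b → T.Desc b v → b ≠ v → T.Desc b (σ v) := by
  intro b hb
  induction hb with
  | root =>
    intro hd hne
    exact absurd (T.descRoot hd).symm hne
  | strat w hw hrw ih =>
    intro hd hne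
    have hcw : σ w ∈ T.children w := hσ.1 w hw ((T.reachS_iff σ w).mpr hrw)
    obtain ⟨hσw_ne, hσw_par⟩ := T.memChildren.mp hcw
    have hstep := T.descStep hd hne
    rw [hσw_par] at hstep
    by_cases hwv : w = v
    · subst hwv; exact T.descRefl _
    · exact T.descTrans ⟨1, hσw_par⟩ (ih hstep.2 hwv)
  | act a u ha hra hu ih =>
    intro hd hne
    obtain ⟨hu_ne, hu_par⟩ := T.memChildren.mp hu
    have hstep := T.descStep hd hne
    rw [hu_par] at hstep
    have hav : a ≠ v := fun h => Finset.disjoint_left.mp T.disj hv (h ▸ ha)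
    exact T.descTrans ⟨1, hu_par⟩ (ih hstep.2 hav)

lemma existsChildOfDesc {b c : V} (hd : T.Desc b c) (hne : b ≠ c) (hcr : c ≠ T.root) :
    ∃ d : V, d ≠ T.root ∧ T.parent d = c := by
  obtain ⟨j, hj⟩ := hd
  cases j with
  | zero => exact absurd hj hne
  | succ n =>
    refine ⟨T.parent^[n] b, ?_, by
      rw [← Function.iterate_succ_apply' T.parent n b]; exact hj⟩
    intro h
    apply hcr
    rw [← hj, Function.iterate_succ_apply', h, T.parent_root]

/-- A strict action descendant of an action `a` descends through an infoset
child of `a`. -/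
lemma strictDescAction {a b : V} (ha : a ∈ T.A) (hb : b ∈ T.A)
    (hd : T.Desc b a) (hne : b ≠ a) :
    ∃ c ∈ T.children a, c ∈ T.N ∧ T.Desc b c := by
  obtain ⟨k, hk⟩ := hd
  cases k with
  | zero => exact absurd hk hne
  | succ n =>
    have hpc : T.parent (T.parent^[n] b) = a := by
      rw [← Function.iterate_succ_apply' T.parent n b]; exact hk
    have hcroot : T.parent^[n] b ≠ T.root := by
      intro h; rw [h, T.parent_root] at hpc; exact T.rootNotA (hpc ▸ ha)
    have hcchild : T.parent^[n] b ∈ T.children a := T.memChildren.mpr ⟨hcroot, hpc⟩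
    have hcnotA : T.parent^[n] b ∉ T.A := T.action_child _ hcroot (hpc ▸ ha)
    have hbc : T.Desc b (T.parent^[n] b) := ⟨n, rfl⟩
    have hbne : b ≠ T.parent^[n] b := fun h => hcnotA (h ▸ hb)
    obtain ⟨d, hd1, hd2⟩ := T.existsChildOfDesc hbc hbne hcroot
    have hcN : T.parent^[n] b ∈ T.N :=
      ((T.internal_iff _).mpr ⟨d, hd1, hd2⟩).resolve_right hcnotA
    exact ⟨T.parent^[n] b, hcchild, hcN, hbc⟩

end EFTree

theorem stmt5 {V : Type*} [Fintype V] [DecidableEq V] (T : EFTree V)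
    (m : V → ℕ)
    (hmA : ∀ a ∈ T.A, m a = 1 + ∑ v ∈ (T.children a).filter (· ∈ T.N), m v)
    (hmN : ∀ v ∈ T.N, m v = ∑ a ∈ T.children v, m a)
    (β : V → ℝ) (hβr : β T.root = 1)
    (hβA : ∀ a ∈ T.A, β a = (m a : ℝ) * β (T.parent a))
    (hβN : ∀ v ∈ T.N, v ≠ T.root → β v = β (T.parent v) / (m v : ℝ))
    (σ : V → V) (hσ : T.IsRedStrat σ) :
    ∀ v ∈ T.N, v ∈ T.reachS σ →
      ∑ a ∈ (T.Aset σ).filter (fun a => T.Desc a v), (1 : ℝ) / β a = 1 / β v := by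
  have hmA1 : ∀ a ∈ T.A, 1 ≤ m a := fun a ha => by rw [hmA a ha]; omega
  have hmN1 : ∀ v ∈ T.N, 1 ≤ m v := by
    intro v hv
    have hpos : 0 < (T.children v).card := by
      have := T.branching v hv
      simpa [EFTree.children] using Nat.lt_of_lt_of_le Nat.zero_lt_one this.le
    obtain ⟨a, ha⟩ := Finset.card_pos.mp hpos
    obtain ⟨har, hap⟩ := T.memChildren.mp ha
    have haA : a ∈ T.A := T.infoset_child a har (hap ▸ hv)
    rw [hmN v hv]
    calc 1 ≤ m a := hmA1 a haA
      _ ≤ ∑ b ∈ T.children v, m b :=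
        Finset.single_le_sum (fun i _ => Nat.zero_le _) ha
  have hβpos : ∀ u : V, u ∈ T.N ∨ u ∈ T.A → 0 < β u := by
    suffices H : ∀ n : ℕ, ∀ u : V, T.depth u ≤ n → u ∈ T.N ∨ u ∈ T.A → 0 < β u from
      fun u => H (T.depth u) u le_rfl
    intro n
    induction n with
    | zero =>
      intro u hd _
      have hroot : u = T.root := by
        by_contra h
        rw [T.depth_parent u h] at hd
        omega
      rw [hroot, hβr]; exact one_pos
    | succ n ih =>
      intro u hd hu
      by_cases hr : u = T.root
      · rw [hr, hβr]; exact one_pos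
      · have hp : T.parent u ∈ T.N ∨ T.parent u ∈ T.A :=
          (T.internal_iff _).mpr ⟨u, hr, rfl⟩
        have hdp : T.depth (T.parent u) ≤ n := by
          have := T.depth_parent u hr; omega
        have hpβ := ih _ hdp hp
        rcases hu with hu | hu
        · rw [hβN u hu hr]
          exact div_pos hpβ (by exact_mod_cast hmN1 u hu)
        · rw [hβA u hu]
          exact mul_pos (by exact_mod_cast hmA1 u hu) hpβ
  suffices H : ∀ n : ℕ, ∀ v ∈ T.N, v ∈ T.reachS σ → m v ≤ n →
      ∑ a ∈ (T.Aset σ).filter (fun a => T.Desc a v), (1 : ℝ) / β a = 1 / β v from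
    fun v hv hr => H (m v) v hv hr le_rfl
  intro n
  induction n with
  | zero =>
    intro v hv _ hle
    exact absurd hle (by have := hmN1 v hv; omega)
  | succ n ih =>
    intro v hv hr hle
    have hca : σ v ∈ T.children v := hσ.1 v hv hr
    obtain ⟨haroot, hapar⟩ := T.memChildren.mp hca
    have haA : σ v ∈ T.A := T.infoset_child _ haroot (by rw [hapar]; exact hv)
    have hareach : σ v ∈ T.reachS σ := T.reachStrat hv hr
    set K := (T.children (σ v)).filter (· ∈ T.N) with hK
    have hpart : (T.Aset σ).filter (fun b => T.Desc b v)
        = insert (σ v) (K.biUnion fun u => (T.Aset σ).filter (fun b => T.Desc b u)) := by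
      ext b
      simp only [Finset.mem_insert, Finset.mem_biUnion, Finset.mem_filter, EFTree.Aset, hK]
      constructor
      · rintro ⟨⟨hbA, hbr⟩, hbd⟩
        have hbv : b ≠ v := fun h => Finset.disjoint_left.mp T.disj hv (h ▸ hbA)
        have hba : T.Desc b (σ v) :=
          T.descThroughSigma hσ hv ((T.reachS_iff σ b).mp hbr) hbd hbv
        by_cases hba' : b = σ v
        · exact Or.inl hba'
        · obtain ⟨c, hc, hcN, hbc⟩ := T.strictDescAction haA hbA hba hba'
          exact Or.inr ⟨c, ⟨hc, hcN⟩, ⟨hbA, hbr⟩, hbc⟩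
      · rintro (hb | ⟨u, ⟨hu_ch, _⟩, ⟨hbA, hbr⟩, hbd⟩)
        · subst hb; exact ⟨⟨haA, hareach⟩, ⟨1, hapar⟩⟩
        · refine ⟨⟨hbA, hbr⟩, ?_⟩
          exact T.descTrans (T.descTrans hbd ⟨1, (T.memChildren.mp hu_ch).2⟩) ⟨1, hapar⟩
    rw [hpart]
    have hanotin : σ v ∉ K.biUnion fun u => (T.Aset σ).filter (fun b => T.Desc b u) := by
      simp only [Finset.mem_biUnion, Finset.mem_filter, not_exists, not_and, hK]
      rintro u ⟨hu_ch, _⟩ _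
      intro had
      have h1 := T.descDepthLe had
      have h2 := T.childDepth hu_ch
      omega
    rw [Finset.sum_insert hanotin]
    have hdisj : (↑K : Set V).PairwiseDisjoint
        fun u => (T.Aset σ).filter (fun b => T.Desc b u) := by
      intro u1 hu1 u2 hu2 hne
      have hu1' : u1 ∈ T.children (σ v) := (Finset.mem_filter.mp hu1).1
      have hu2' : u2 ∈ T.children (σ v) := (Finset.mem_filter.mp hu2).1
      refine Finset.disjoint_left.mpr ?_
      intro b hb1 hb2
      have hd1 : T.Desc b u1 := (Finset.mem_filter.mp hb1).2
      have hd2 : T.Desc b u2 := (Finset.mem_filter.mp hb2).2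
      exact hne (T.siblingEq hu1' hu2' hd1 hd2)
    rw [Finset.sum_biUnion hdisj]
    have hsum : ∀ u ∈ K,
        (∑ b ∈ (T.Aset σ).filter (fun b => T.Desc b u), (1 : ℝ) / β b) = 1 / β u := by
      intro u hu
      obtain ⟨hu_ch, huN⟩ := Finset.mem_filter.mp hu
      have hureach : u ∈ T.reachS σ := T.reachChild haA hareach hu_ch
      have hmu : m u ≤ n := by
        have h1 : m u < m (σ v) := by
          rw [hmA _ haA, ← hK]
          have := Finset.single_le_sum (f := m)
            (fun i _ => Nat.zero_le _) (by exact hu : u ∈ K)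
          omega
        have h2 : m (σ v) ≤ m v := by
          rw [hmN v hv]
          exact Finset.single_le_sum (fun i _ => Nat.zero_le _) hca
        omega
      exact ih u huN hureach hmu
    rw [Finset.sum_congr rfl hsum]
    have hβa : 0 < β (σ v) := hβpos _ (Or.inr haA)
    have hβv : 0 < β v := hβpos v (Or.inl hv)
    have hma : (0 : ℝ) < (m (σ v) : ℝ) := by exact_mod_cast hmA1 _ haA
    have hβu : ∀ u ∈ K, (1 : ℝ) / β u = (m u : ℝ) / β (σ v) := by
      intro u hu
      obtain ⟨hu_ch, huN⟩ := Finset.mem_filter.mp hu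
      obtain ⟨hur, hup⟩ := T.memChildren.mp hu_ch
      rw [hβN u huN hur, hup, one_div_div]
    rw [Finset.sum_congr rfl hβu, ← Finset.sum_div, ← add_div]
    have hcast : (1 : ℝ) + ∑ u ∈ K, (m u : ℝ) = (m (σ v) : ℝ) := by
      rw [hmA _ haA, ← hK]
      push_cast
      rfl
    rw [hcast, hβA _ haA, hapar]
    have h1 : (m (σ v) : ℝ) ≠ 0 := ne_of_gt hma
    have h2 : β v ≠ 0 := ne_of_gt hβv
    field_simp
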